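/- Let C ≠ 0, q and α be real. (1) If ψ is a finite linear combination of {e_{n,m} : n ≥ 1, m ≥ 1}, then H_{S¹}ψ = (1/(2C))(−2i ∂/∂θ₁ + q)²ψ − 2α cos(θ₁−θ₂)·ψ. (2) If ψ is a finite linear combination of {e_{n,m} : n ≤ −2, m ≤ −2}, then H_{S¹}ψ = (1/(2C))(−2i ∂/∂θ₁ + 1 + q)²ψ − 2α cos(θ₁−θ₂)·ψ. (3) If ψ is a finite linear combination of {e_{n,m} : n ≤ −1, m ≥ 1}, then H_{S¹}ψ = (1/(2C))(−2i ∂/∂θ₁ + q)²ψ − 2α cos(θ₁+θ₂)·ψ. (4) If ψ is a finite linear combination of {e_{n,m} : n ≥ 1, m ≤ −2}, then H_{S¹}ψ = (1/(2C))(−2i ∂/∂θ₁ + 1 + q)²ψ − 2α cos(θ₁+θ₂)·ψ. -/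

import Mathlib

noncomputable section

/-- Fourier coefficient model of `L²((ℝ/2πℤ)²)`: trigonometric polynomials and more
general elements are described by their coefficient families `c : ℤ×ℤ → ℂ`,
`c ↔ Σ c(n,m) e^{i(nθ₁+mθ₂)}`. -/
abbrev Coef := (ℤ × ℤ) → ℂ

/-- The projection `P¹_M` (restriction of the first Fourier index to `M`). -/
def proj1 (S : ℤ → Prop) [DecidablePred S] (c : Coef) : Coef := fun p =>
  if S p.1 then c p else 0

/-- The projection `P²_M` (restriction of the second Fourier index to `M`). -/
def proj2 (S : ℤ → Prop) [DecidablePred S] (c : Coef) : Coef := fun p =>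
  if S p.2 then c p else 0

/-- Multiplication by `e^{i(aθ₁+bθ₂)}`, i.e. the shift of Fourier coefficients. -/
def Emul (a b : ℤ) (c : Coef) : Coef := fun p => c (p.1 - a, p.2 - b)

/-- `A₀ = E_{1,1}P¹_{(−∞,−1]} + E_{−1,1}P¹_{[1,∞)}`. -/
def opA0 (c : Coef) : Coef :=
  Emul 1 1 (proj1 (fun n => n ≤ -1) c) + Emul (-1) 1 (proj1 (fun n => 1 ≤ n) c)

/-- `A₊ = E_{−1,−1}P¹_{(−∞,0]} + E_{−1,1}P¹_{[1,∞)} + E_{1,1}P¹_{(−∞,−1]} + E_{1,−1}P¹_{[0,∞)}`. -/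
def opAplus (c : Coef) : Coef :=
  Emul (-1) (-1) (proj1 (fun n => n ≤ 0) c) + Emul (-1) 1 (proj1 (fun n => 1 ≤ n) c)
    + Emul 1 1 (proj1 (fun n => n ≤ -1) c) + Emul 1 (-1) (proj1 (fun n => 0 ≤ n) c)

/-- `A₋₁ = E_{1,−1}P¹_{(−∞,−2]} + E_{1,0}P¹_{{−1}} + E_{−1,0}P¹_{{0}} + E_{−1,−1}P¹_{[1,∞)}`. -/
def opAm1 (c : Coef) : Coef :=
  Emul 1 (-1) (proj1 (fun n => n ≤ -2) c) + Emul 1 0 (proj1 (fun n => n = -1) c)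
    + Emul (-1) 0 (proj1 (fun n => n = 0) c) + Emul (-1) (-1) (proj1 (fun n => 1 ≤ n) c)

/-- `A₋ = E_{−1,1}P¹_{(−∞,−1]} + E_{−1,0}P¹_{{0}} + E_{−1,−1}P¹_{[1,∞)}
       + E_{1,−1}P¹_{(−∞,−2]} + E_{1,0}P¹_{{−1}} + E_{1,1}P¹_{[0,∞)}`. -/
def opAminus (c : Coef) : Coef :=
  Emul (-1) 1 (proj1 (fun n => n ≤ -1) c) + Emul (-1) 0 (proj1 (fun n => n = 0) c)
    + Emul (-1) (-1) (proj1 (fun n => 1 ≤ n) c) + Emul 1 (-1) (proj1 (fun n => n ≤ -2) c)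
    + Emul 1 0 (proj1 (fun n => n = -1) c) + Emul 1 1 (proj1 (fun n => 0 ≤ n) c)

/-- The tunneling operator
`H_{S¹,T} = A₀ P²_{{0}} + A₊ P²_{[1,∞)} + A₋₁ P²_{{−1}} + A₋ P²_{(−∞,−2]}`. -/
def tunnelS1 (c : Coef) : Coef :=
  opA0 (proj2 (fun m => m = 0) c) + opAplus (proj2 (fun m => 1 ≤ m) c)
    + opAm1 (proj2 (fun m => m = -1) c) + opAminus (proj2 (fun m => m ≤ -2) c)

/-- Fourier coefficient of the single exponential `e_{n,m}(θ₁,θ₂) = e^{i(nθ₁+mθ₂)}`. -/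
def cdelta (n m : ℤ) : Coef := fun p => if p = (n, m) then 1 else 0

/-- The trigonometric polynomial with coefficients `c`, as a function of `(θ₁, θ₂)`. -/
def realize (c : Coef) (θ₁ θ₂ : ℝ) : ℂ :=
  ∑ᶠ p : ℤ × ℤ, c p * Complex.exp (Complex.I * ((p.1 : ℂ) * (θ₁ : ℂ) + (p.2 : ℂ) * (θ₂ : ℂ)))

/-- The kinetic part: `e_{n,m} ↦ (1/(2C))(2n+q)² e_{n,m}` if `m ≥ 0`,
`e_{n,m} ↦ (1/(2C))(2n+1+q)² e_{n,m}` if `m ≤ −1`. -/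
def kinS1 (C q : ℝ) (c : Coef) : Coef := fun p =>
  if 0 ≤ p.2 then ((1 / (2 * C) * (2 * (p.1 : ℝ) + q) ^ 2 : ℝ) : ℂ) * c p
  else ((1 / (2 * C) * (2 * (p.1 : ℝ) + 1 + q) ^ 2 : ℝ) : ℂ) * c p

/-- The Josephson junction Hamiltonian
`H_{S¹} = (1/(2C))(−2i∂_{θ₁}+q)² P²_{[0,∞)} + (1/(2C))(−2i∂_{θ₁}+1+q)² P²_{(−∞,−1]} − α H_{S¹,T}`. -/
def hamS1 (C q α : ℝ) (c : Coef) : Coef := kinS1 C q c - (α : ℂ) • tunnelS1 c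

/-- The first-order differential operator `−2i d/dθ + q`. -/
def Dop (q : ℝ) (g : ℝ → ℂ) : ℝ → ℂ := fun t =>
  (-2) * Complex.I * deriv g t + (q : ℂ) * g t


section Helpers

open Function

/-- The elementary exponential appearing in `realize`. -/
def eF (p : ℤ × ℤ) (θ₁ θ₂ : ℝ) : ℂ :=
  Complex.exp (Complex.I * ((p.1 : ℂ) * (θ₁ : ℂ) + (p.2 : ℂ) * (θ₂ : ℂ)))

lemma realize_eq_finsum (c : Coef) (θ₁ θ₂ : ℝ) :
    realize c θ₁ θ₂ = ∑ᶠ p : ℤ × ℤ, c p * eF p θ₁ θ₂ := rfl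

lemma support_term_subset (c : Coef) (θ₁ θ₂ : ℝ) :
    support (fun p => c p * eF p θ₁ θ₂) ⊆ support c := by
  intro p hp
  simp only [mem_support] at hp ⊢
  intro h0; apply hp; rw [h0, zero_mul]

lemma realize_eq_sum (c : Coef) {s : Finset (ℤ × ℤ)} (h : support c ⊆ (s : Set (ℤ × ℤ)))
    (θ₁ θ₂ : ℝ) : realize c θ₁ θ₂ = ∑ p ∈ s, c p * eF p θ₁ θ₂ :=
  finsum_eq_finset_sum_of_support_subset _ ((support_term_subset c θ₁ θ₂).trans h)

lemma realize_add (c d : Coef) (hc : (support c).Finite) (hd : (support d).Finite) (θ₁ θ₂ : ℝ) :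
    realize (c + d) θ₁ θ₂ = realize c θ₁ θ₂ + realize d θ₁ θ₂ := by
  rw [realize_eq_finsum, realize_eq_finsum, realize_eq_finsum,
    ← finsum_add_distrib (hc.subset (support_term_subset c θ₁ θ₂))
      (hd.subset (support_term_subset d θ₁ θ₂))]
  exact finsum_congr fun p => by simp [add_mul]

lemma realize_smul (z : ℂ) (c : Coef) (θ₁ θ₂ : ℝ) :
    realize (z • c) θ₁ θ₂ = z * realize c θ₁ θ₂ := by
  rw [realize_eq_finsum, realize_eq_finsum]
  calc (∑ᶠ p : ℤ × ℤ, (z • c) p * eF p θ₁ θ₂)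
      = ∑ᶠ p : ℤ × ℤ, z • (c p * eF p θ₁ θ₂) :=
        finsum_congr fun p => by simp [smul_eq_mul, mul_assoc]
    _ = z * ∑ᶠ p : ℤ × ℤ, c p * eF p θ₁ θ₂ := (smul_finsum z _).symm

lemma support_Emul_finite (a b : ℤ) {c : Coef} (hc : (support c).Finite) :
    (support (Emul a b c)).Finite := by
  apply (hc.image (fun p : ℤ × ℤ => (p.1 + a, p.2 + b))).subset
  intro p hp
  exact ⟨(p.1 - a, p.2 - b), hp, by simp⟩

lemma realize_Emul (a b : ℤ) (c : Coef) (hc : (support c).Finite) (θ₁ θ₂ : ℝ) :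
    realize (Emul a b c) θ₁ θ₂
      = Complex.exp (Complex.I * ((a : ℂ) * θ₁ + (b : ℂ) * θ₂)) * realize c θ₁ θ₂ := by
  classical
  set s := hc.toFinset with hs_def
  have hsub : support c ⊆ (s : Set (ℤ × ℤ)) := by simp [hs_def]
  have ht : support (Emul a b c)
      ⊆ ((s.image (fun p : ℤ × ℤ => (p.1 + a, p.2 + b))) : Set (ℤ × ℤ)) := by
    intro p hp
    simp only [Finset.coe_image, Set.mem_image, Finset.mem_coe]
    refine ⟨(p.1 - a, p.2 - b), ?_, by simp⟩
    have : (p.1 - a, p.2 - b) ∈ support c := hp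
    simpa [hs_def] using hsub this
  rw [realize_eq_sum _ ht, realize_eq_sum c hsub,
    Finset.sum_image (fun x _ y _ h => by
      have h1 : x.1 + a = y.1 + a := congrArg Prod.fst h
      have h2 : x.2 + b = y.2 + b := congrArg Prod.snd h
      exact Prod.ext (by omega) (by omega)),
    Finset.mul_sum]
  refine Finset.sum_congr rfl fun p _ => ?_
  have h1 : Emul a b c (p.1 + a, p.2 + b) = c p := by simp [Emul]
  have h2 : (Complex.I * (((p.1 + a : ℤ) : ℂ) * (θ₁ : ℂ) + ((p.2 + b : ℤ) : ℂ) * (θ₂ : ℂ)))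
      = Complex.I * ((a : ℂ) * θ₁ + (b : ℂ) * θ₂)
        + Complex.I * ((p.1 : ℂ) * (θ₁ : ℂ) + (p.2 : ℂ) * (θ₂ : ℂ)) := by push_cast; ring
  rw [h1]
  simp only [eF]
  rw [h2, Complex.exp_add]
  ring

lemma Dop_sum (q' : ℝ) (s : Finset (ℤ × ℤ)) (c : Coef) (θ₂ : ℝ) :
    Dop q' (fun t => ∑ p ∈ s, c p * eF p t θ₂)
      = fun θ₁ => ∑ p ∈ s, ((2 * (p.1 : ℂ) + (q' : ℂ)) * c p) * eF p θ₁ θ₂ := by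
  funext θ₁
  have hder : ∀ p ∈ s, HasDerivAt (fun t : ℝ => c p * eF p t θ₂)
      (c p * (eF p θ₁ θ₂ * (Complex.I * (p.1 : ℂ)))) θ₁ := by
    intro p _
    have h0 : HasDerivAt (fun t : ℝ => (t : ℂ)) 1 θ₁ := by
      simpa using (hasDerivAt_id θ₁).ofReal_comp
    have h1 : HasDerivAt
        (fun t : ℝ => Complex.I * ((p.1 : ℂ) * (t : ℂ) + (p.2 : ℂ) * (θ₂ : ℂ)))
        (Complex.I * (p.1 : ℂ)) θ₁ := by
      simpa using (((h0.const_mul ((p.1 : ℂ))).add_const ((p.2 : ℂ) * (θ₂ : ℂ))).const_mul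
        Complex.I)
    simpa [eF] using (h1.cexp.const_mul (c p))
  have hdiff : ∀ p ∈ s, DifferentiableAt ℝ (fun t : ℝ => c p * eF p t θ₂) θ₁ :=
    fun p hp => (hder p hp).differentiableAt
  have hD : deriv (fun t : ℝ => ∑ p ∈ s, c p * eF p t θ₂) θ₁
      = ∑ p ∈ s, c p * (eF p θ₁ θ₂ * (Complex.I * (p.1 : ℂ))) := by
    rw [deriv_fun_sum hdiff]
    exact Finset.sum_congr rfl fun p hp => (hder p hp).deriv
  simp only [Dop, hD, Finset.mul_sum]
  rw [← Finset.sum_add_distrib]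
  refine Finset.sum_congr rfl fun p _ => ?_
  linear_combination (-2 * (p.1 : ℂ) * c p * eF p θ₁ θ₂) * Complex.I_mul_I

lemma Dop_Dop_sum (q' : ℝ) (s : Finset (ℤ × ℤ)) (c : Coef) (θ₂ : ℝ) :
    Dop q' (Dop q' (fun t => ∑ p ∈ s, c p * eF p t θ₂))
      = fun θ₁ => ∑ p ∈ s, ((2 * (p.1 : ℂ) + (q' : ℂ)) ^ 2 * c p) * eF p θ₁ θ₂ := by
  rw [Dop_sum, Dop_sum]
  funext θ₁
  exact Finset.sum_congr rfl fun p _ => by ring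

lemma proj1_eq_self {S : ℤ → Prop} [DecidablePred S] {c : Coef}
    (h : ∀ p : ℤ × ℤ, c p ≠ 0 → S p.1) : proj1 S c = c := by
  funext p
  by_cases hS : S p.1
  · simp [proj1, hS]
  · simp only [proj1, if_neg hS]
    by_contra h0
    exact hS (h p fun hc => h0 hc.symm)

lemma proj1_eq_zero {S : ℤ → Prop} [DecidablePred S] {c : Coef}
    (h : ∀ p : ℤ × ℤ, c p ≠ 0 → ¬ S p.1) : proj1 S c = 0 := by
  funext p
  by_cases hS : S p.1
  · simp only [proj1, if_pos hS, Pi.zero_apply]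
    by_contra h0
    exact h p h0 hS
  · simp [proj1, hS]

lemma proj2_eq_self {S : ℤ → Prop} [DecidablePred S] {c : Coef}
    (h : ∀ p : ℤ × ℤ, c p ≠ 0 → S p.2) : proj2 S c = c := by
  funext p
  by_cases hS : S p.2
  · simp [proj2, hS]
  · simp only [proj2, if_neg hS]
    by_contra h0
    exact hS (h p fun hc => h0 hc.symm)

lemma proj2_eq_zero {S : ℤ → Prop} [DecidablePred S] {c : Coef}
    (h : ∀ p : ℤ × ℤ, c p ≠ 0 → ¬ S p.2) : proj2 S c = 0 := by
  funext p
  by_cases hS : S p.2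
  · simp only [proj2, if_pos hS, Pi.zero_apply]
    by_contra h0
    exact h p h0 hS
  · simp [proj2, hS]

@[simp] lemma proj1_zero (S : ℤ → Prop) [DecidablePred S] : proj1 S (0 : Coef) = 0 := by
  funext p; simp [proj1]

@[simp] lemma Emul_zero (a b : ℤ) : Emul a b (0 : Coef) = 0 := rfl

@[simp] lemma opA0_zero : opA0 0 = 0 := by
  funext p; simp [opA0]

@[simp] lemma opAm1_zero : opAm1 0 = 0 := by
  funext p; simp [opAm1]

@[simp] lemma opAminus_zero : opAminus 0 = 0 := by
  funext p; simp [opAminus]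

lemma master (C q α q' : ℝ) (a b : ℤ) (ψ : Coef) (hfin : (support ψ).Finite)
    (hkin : kinS1 C q ψ = fun p => ((1 / (2 * C) * (2 * (p.1 : ℝ) + q') ^ 2 : ℝ) : ℂ) * ψ p)
    (htun : tunnelS1 ψ = Emul (-a) (-b) ψ + Emul a b ψ)
    (θ₁ θ₂ : ℝ) (z : ℂ) (hz : z = (a : ℂ) * θ₁ + (b : ℂ) * θ₂) :
    realize (hamS1 C q α ψ) θ₁ θ₂
      = ((1 / (2 * C) : ℝ) : ℂ) * Dop q' (Dop q' (fun t => realize ψ t θ₂)) θ₁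
        - 2 * (α : ℂ) * Complex.cos z * realize ψ θ₁ θ₂ := by
  classical
  set s := hfin.toFinset with hs_def
  have hs : support ψ ⊆ (s : Set (ℤ × ℤ)) := fun p hp => by simpa [hs_def] using hp
  have hksub : support (kinS1 C q ψ) ⊆ support ψ := by
    rw [hkin]
    intro p hp
    simp only [mem_support] at hp ⊢
    intro h0; exact hp (by simp [h0])
  have hkfin := hfin.subset hksub
  have hEfin : ∀ a' b' : ℤ, (support (Emul a' b' ψ)).Finite := fun a' b' =>
    support_Emul_finite a' b' hfin
  have hTfin : (support ((-(α : ℂ)) • (Emul (-a) (-b) ψ + Emul a b ψ))).Finite := by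
    apply ((hEfin (-a) (-b)).union (hEfin a b)).subset
    intro p hp
    simp only [mem_support, Pi.smul_apply, Pi.add_apply, smul_eq_mul] at hp
    by_contra hcon
    simp only [Set.mem_union, mem_support, not_or, not_not] at hcon
    apply hp; rw [hcon.1, hcon.2]; ring
  have hham : hamS1 C q α ψ
      = kinS1 C q ψ + (-(α : ℂ)) • (Emul (-a) (-b) ψ + Emul a b ψ) := by
    rw [show hamS1 C q α ψ = kinS1 C q ψ - (α : ℂ) • tunnelS1 ψ from rfl, htun,
      sub_eq_add_neg, ← neg_smul]
  rw [hham, realize_add _ _ hkfin hTfin, realize_smul,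
    realize_add _ _ (hEfin _ _) (hEfin _ _), realize_Emul _ _ _ hfin, realize_Emul _ _ _ hfin]
  have hfψ : (fun t => realize ψ t θ₂) = fun t => ∑ p ∈ s, ψ p * eF p t θ₂ :=
    funext fun t => realize_eq_sum ψ hs t θ₂
  rw [hfψ, Dop_Dop_sum]
  have hksupp2 : support
      (fun p : ℤ × ℤ => ((1 / (2 * C) * (2 * (p.1 : ℝ) + q') ^ 2 : ℝ) : ℂ) * ψ p)
      ⊆ (s : Set (ℤ × ℤ)) := by
    intro p hp
    apply hs
    simp only [mem_support] at hp ⊢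
    intro h0; exact hp (by simp [h0])
  rw [hkin, realize_eq_sum _ hksupp2 θ₁ θ₂, Finset.mul_sum]
  have hsum : ∀ p ∈ s,
      (((1 / (2 * C) * (2 * (p.1 : ℝ) + q') ^ 2 : ℝ)) : ℂ) * ψ p * eF p θ₁ θ₂
        = ((1 / (2 * C) : ℝ) : ℂ) * (((2 * (p.1 : ℂ) + (q' : ℂ)) ^ 2 * ψ p) * eF p θ₁ θ₂) := by
    intro p _; push_cast; ring
  rw [Finset.sum_congr rfl hsum]
  have e1 : Complex.exp (Complex.I * (((-a : ℤ) : ℂ) * (θ₁ : ℂ) + ((-b : ℤ) : ℂ) * (θ₂ : ℂ)))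
      = Complex.exp (-z * Complex.I) := by rw [hz]; congr 1; push_cast; ring
  have e2 : Complex.exp (Complex.I * ((a : ℂ) * (θ₁ : ℂ) + (b : ℂ) * (θ₂ : ℂ)))
      = Complex.exp (z * Complex.I) := by rw [hz]; congr 1; ring
  rw [e1, e2]
  linear_combination ((α : ℂ) * realize ψ θ₁ θ₂) * Complex.two_cos z

end Helpers

/-- the action of `H_{S¹}` on finite linear combinations of the
`e_{n,m}` drawn from each of the four corner regions. -/
theorem stmt14 (C q α : ℝ) (hC : C ≠ 0) (ψ : Coef)
    (hfin : (Function.support ψ).Finite) :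
    ((∀ p : ℤ × ℤ, ψ p ≠ 0 → 1 ≤ p.1 ∧ 1 ≤ p.2) → ∀ θ₁ θ₂ : ℝ,
      realize (hamS1 C q α ψ) θ₁ θ₂
        = ((1 / (2 * C) : ℝ) : ℂ) * Dop q (Dop q (fun t => realize ψ t θ₂)) θ₁
          - 2 * (α : ℂ) * Complex.cos ((θ₁ : ℂ) - (θ₂ : ℂ)) * realize ψ θ₁ θ₂) ∧
    ((∀ p : ℤ × ℤ, ψ p ≠ 0 → p.1 ≤ -2 ∧ p.2 ≤ -2) → ∀ θ₁ θ₂ : ℝ,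
      realize (hamS1 C q α ψ) θ₁ θ₂
        = ((1 / (2 * C) : ℝ) : ℂ) * Dop (1 + q) (Dop (1 + q) (fun t => realize ψ t θ₂)) θ₁
          - 2 * (α : ℂ) * Complex.cos ((θ₁ : ℂ) - (θ₂ : ℂ)) * realize ψ θ₁ θ₂) ∧
    ((∀ p : ℤ × ℤ, ψ p ≠ 0 → p.1 ≤ -1 ∧ 1 ≤ p.2) → ∀ θ₁ θ₂ : ℝ,
      realize (hamS1 C q α ψ) θ₁ θ₂
        = ((1 / (2 * C) : ℝ) : ℂ) * Dop q (Dop q (fun t => realize ψ t θ₂)) θ₁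
          - 2 * (α : ℂ) * Complex.cos ((θ₁ : ℂ) + (θ₂ : ℂ)) * realize ψ θ₁ θ₂) ∧
    ((∀ p : ℤ × ℤ, ψ p ≠ 0 → 1 ≤ p.1 ∧ p.2 ≤ -2) → ∀ θ₁ θ₂ : ℝ,
      realize (hamS1 C q α ψ) θ₁ θ₂
        = ((1 / (2 * C) : ℝ) : ℂ) * Dop (1 + q) (Dop (1 + q) (fun t => realize ψ t θ₂)) θ₁
          - 2 * (α : ℂ) * Complex.cos ((θ₁ : ℂ) + (θ₂ : ℂ)) * realize ψ θ₁ θ₂) := by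
  refine ⟨?_, ?_, ?_, ?_⟩ <;> intro hreg θ₁ θ₂
  · -- region 1: n ≥ 1, m ≥ 1
    have hkin : kinS1 C q ψ
        = fun p => ((1 / (2 * C) * (2 * (p.1 : ℝ) + q) ^ 2 : ℝ) : ℂ) * ψ p := by
      funext p
      by_cases h2 : (0 : ℤ) ≤ p.2
      · simp [kinS1, h2]
      · have h0 : ψ p = 0 := by
          by_contra h0; have := (hreg p h0).2; omega
        simp [kinS1, h2, h0]
    have t1 : proj2 (fun m => m = 0) ψ = 0 :=
      proj2_eq_zero fun p hp => by have := (hreg p hp).2; omega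
    have t2 : proj2 (fun m => 1 ≤ m) ψ = ψ := proj2_eq_self fun p hp => (hreg p hp).2
    have t3 : proj2 (fun m => m = -1) ψ = 0 :=
      proj2_eq_zero fun p hp => by have := (hreg p hp).2; omega
    have t4 : proj2 (fun m => m ≤ -2) ψ = 0 :=
      proj2_eq_zero fun p hp => by have := (hreg p hp).2; omega
    have p1 : proj1 (fun n => n ≤ 0) ψ = 0 :=
      proj1_eq_zero fun p hp => by have := (hreg p hp).1; omega
    have p2 : proj1 (fun n => 1 ≤ n) ψ = ψ := proj1_eq_self fun p hp => (hreg p hp).1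
    have p3 : proj1 (fun n => n ≤ -1) ψ = 0 :=
      proj1_eq_zero fun p hp => by have := (hreg p hp).1; omega
    have p4 : proj1 (fun n => 0 ≤ n) ψ = ψ :=
      proj1_eq_self fun p hp => by have := (hreg p hp).1; omega
    have htun : tunnelS1 ψ = Emul (-1) (-(-1)) ψ + Emul 1 (-1) ψ := by
      unfold tunnelS1 opA0 opAplus opAm1 opAminus
      rw [t1, t2, t3, t4]
      simp only [proj1_zero, Emul_zero, add_zero, zero_add]
      rw [p1, p2, p3, p4]
      norm_num
    exact master C q α q 1 (-1) ψ hfin hkin htun θ₁ θ₂ ((θ₁ : ℂ) - (θ₂ : ℂ))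
      (by push_cast; ring)
  · -- region 2: n ≤ -2, m ≤ -2
    have hkin : kinS1 C q ψ
        = fun p => ((1 / (2 * C) * (2 * (p.1 : ℝ) + (1 + q)) ^ 2 : ℝ) : ℂ) * ψ p := by
      funext p
      by_cases h2 : (0 : ℤ) ≤ p.2
      · have h0 : ψ p = 0 := by
          by_contra h0; have := (hreg p h0).2; omega
        simp [kinS1, h2, h0]
      · simp only [kinS1, if_neg h2]
        rw [show (2 * (p.1 : ℝ) + 1 + q) = 2 * (p.1 : ℝ) + (1 + q) from by ring]
    have t1 : proj2 (fun m => m = 0) ψ = 0 :=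
      proj2_eq_zero fun p hp => by have := (hreg p hp).2; omega
    have t2 : proj2 (fun m => 1 ≤ m) ψ = 0 :=
      proj2_eq_zero fun p hp => by have := (hreg p hp).2; omega
    have t3 : proj2 (fun m => m = -1) ψ = 0 :=
      proj2_eq_zero fun p hp => by have := (hreg p hp).2; omega
    have t4 : proj2 (fun m => m ≤ -2) ψ = ψ := proj2_eq_self fun p hp => (hreg p hp).2
    have p1 : proj1 (fun n => n ≤ -1) ψ = ψ :=
      proj1_eq_self fun p hp => by have := (hreg p hp).1; omega
    have p2 : proj1 (fun n => n = 0) ψ = 0 :=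
      proj1_eq_zero fun p hp => by have := (hreg p hp).1; omega
    have p3 : proj1 (fun n => 1 ≤ n) ψ = 0 :=
      proj1_eq_zero fun p hp => by have := (hreg p hp).1; omega
    have p4 : proj1 (fun n => n ≤ -2) ψ = ψ := proj1_eq_self fun p hp => (hreg p hp).1
    have p5 : proj1 (fun n => n = -1) ψ = 0 :=
      proj1_eq_zero fun p hp => by have := (hreg p hp).1; omega
    have p6 : proj1 (fun n => 0 ≤ n) ψ = 0 :=
      proj1_eq_zero fun p hp => by have := (hreg p hp).1; omega
    have htun : tunnelS1 ψ = Emul (-1) (-(-1)) ψ + Emul 1 (-1) ψ := by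
      unfold tunnelS1 opA0 opAplus opAm1 opAminus
      rw [t1, t2, t3, t4]
      simp only [proj1_zero, Emul_zero, add_zero, zero_add]
      rw [p1, p2, p3, p4, p5, p6]
      norm_num
    exact master C q α (1 + q) 1 (-1) ψ hfin hkin htun θ₁ θ₂ ((θ₁ : ℂ) - (θ₂ : ℂ))
      (by push_cast; ring)
  · -- region 3: n ≤ -1, m ≥ 1
    have hkin : kinS1 C q ψ
        = fun p => ((1 / (2 * C) * (2 * (p.1 : ℝ) + q) ^ 2 : ℝ) : ℂ) * ψ p := by
      funext p
      by_cases h2 : (0 : ℤ) ≤ p.2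
      · simp [kinS1, h2]
      · have h0 : ψ p = 0 := by
          by_contra h0; have := (hreg p h0).2; omega
        simp [kinS1, h2, h0]
    have t1 : proj2 (fun m => m = 0) ψ = 0 :=
      proj2_eq_zero fun p hp => by have := (hreg p hp).2; omega
    have t2 : proj2 (fun m => 1 ≤ m) ψ = ψ := proj2_eq_self fun p hp => (hreg p hp).2
    have t3 : proj2 (fun m => m = -1) ψ = 0 :=
      proj2_eq_zero fun p hp => by have := (hreg p hp).2; omega
    have t4 : proj2 (fun m => m ≤ -2) ψ = 0 :=
      proj2_eq_zero fun p hp => by have := (hreg p hp).2; omega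
    have p1 : proj1 (fun n => n ≤ 0) ψ = ψ :=
      proj1_eq_self fun p hp => by have := (hreg p hp).1; omega
    have p2 : proj1 (fun n => 1 ≤ n) ψ = 0 :=
      proj1_eq_zero fun p hp => by have := (hreg p hp).1; omega
    have p3 : proj1 (fun n => n ≤ -1) ψ = ψ := proj1_eq_self fun p hp => (hreg p hp).1
    have p4 : proj1 (fun n => 0 ≤ n) ψ = 0 :=
      proj1_eq_zero fun p hp => by have := (hreg p hp).1; omega
    have htun : tunnelS1 ψ = Emul (-1) (-1) ψ + Emul 1 1 ψ := by
      unfold tunnelS1 opA0 opAplus opAm1 opAminus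
      rw [t1, t2, t3, t4]
      simp only [proj1_zero, Emul_zero, add_zero, zero_add]
      rw [p1, p2, p3, p4]
      norm_num
    exact master C q α q 1 1 ψ hfin hkin htun θ₁ θ₂ ((θ₁ : ℂ) + (θ₂ : ℂ))
      (by push_cast; ring)
  · -- region 4: n ≥ 1, m ≤ -2
    have hkin : kinS1 C q ψ
        = fun p => ((1 / (2 * C) * (2 * (p.1 : ℝ) + (1 + q)) ^ 2 : ℝ) : ℂ) * ψ p := by
      funext p
      by_cases h2 : (0 : ℤ) ≤ p.2
      · have h0 : ψ p = 0 := by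
          by_contra h0; have := (hreg p h0).2; omega
        simp [kinS1, h2, h0]
      · simp only [kinS1, if_neg h2]
        rw [show (2 * (p.1 : ℝ) + 1 + q) = 2 * (p.1 : ℝ) + (1 + q) from by ring]
    have t1 : proj2 (fun m => m = 0) ψ = 0 :=
      proj2_eq_zero fun p hp => by have := (hreg p hp).2; omega
    have t2 : proj2 (fun m => 1 ≤ m) ψ = 0 :=
      proj2_eq_zero fun p hp => by have := (hreg p hp).2; omega
    have t3 : proj2 (fun m => m = -1) ψ = 0 :=
      proj2_eq_zero fun p hp => by have := (hreg p hp).2; omega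
    have t4 : proj2 (fun m => m ≤ -2) ψ = ψ := proj2_eq_self fun p hp => (hreg p hp).2
    have p1 : proj1 (fun n => n ≤ -1) ψ = 0 :=
      proj1_eq_zero fun p hp => by have := (hreg p hp).1; omega
    have p2 : proj1 (fun n => n = 0) ψ = 0 :=
      proj1_eq_zero fun p hp => by have := (hreg p hp).1; omega
    have p3 : proj1 (fun n => 1 ≤ n) ψ = ψ := proj1_eq_self fun p hp => (hreg p hp).1
    have p4 : proj1 (fun n => n ≤ -2) ψ = 0 :=
      proj1_eq_zero fun p hp => by have := (hreg p hp).1; omega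
    have p5 : proj1 (fun n => n = -1) ψ = 0 :=
      proj1_eq_zero fun p hp => by have := (hreg p hp).1; omega
    have p6 : proj1 (fun n => 0 ≤ n) ψ = ψ :=
      proj1_eq_self fun p hp => by have := (hreg p hp).1; omega
    have htun : tunnelS1 ψ = Emul (-1) (-1) ψ + Emul 1 1 ψ := by
      unfold tunnelS1 opA0 opAplus opAm1 opAminus
      rw [t1, t2, t3, t4]
      simp only [proj1_zero, Emul_zero, add_zero, zero_add]
      rw [p1, p2, p3, p4, p5, p6]
      norm_num
    exact master C q α (1 + q) 1 1 ψ hfin hkin htun θ₁ θ₂ ((θ₁ : ℂ) + (θ₂ : ℂ))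
      (by push_cast; ring)
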